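/- Let H be a Hopf algebra, A ⊆ H a right coideal subalgebra that is invariant under the right adjoint action of H (i.e. S(x₁) a x₂ ∈ A for all a ∈ A, x ∈ H), and B ⊆ H any right coideal subalgebra. Then the linear span BA = span{ba | a ∈ A, b ∈ B} is again a right coideal subalgebra of H; in particular it is closed under multiplication. -/

import Mathlib

open TensorProduct

variable {k H : Type*}

/-- The bilinear map `u ⊗ v ↦ u * a * v` on the tensor square of an algebra. -/
noncomputable def sandwichMul [CommSemiring k] [Semiring H] [Algebra k H] (a : H) :
    H ⊗[k] H →ₗ[k] H :=
  TensorProduct.lift <|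
    LinearMap.mk₂ k (fun u v => u * a * v)
      (fun u u' v => by (try simp only []); rw [add_mul, add_mul])
      (fun c u v => by (try simp only []); rw [smul_mul_assoc, smul_mul_assoc])
      (fun u v v' => by (try simp only []); rw [mul_add])
      (fun c u v => by (try simp only []); rw [mul_smul_comm])

/-- The right adjoint action `a ◁ x = S(x₁) a x₂` of a Hopf algebra on itself. -/
noncomputable def rightAdjointAction [CommSemiring k] [Semiring H] [HopfAlgebra k H]
    (a x : H) : H :=
  sandwichMul (k := k) a
    (TensorProduct.map (HopfAlgebra.antipode (R := k)) LinearMap.id (Coalgebra.comul x))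

/-- A subalgebra `A ⊆ H` is a right coideal subalgebra if `Δ(A) ⊆ A ⊗ H`. -/
def IsRightCoidealSubalgebra [CommSemiring k] [Semiring H] [Bialgebra k H]
    (A : Subalgebra k H) : Prop :=
  ∀ a ∈ A, Coalgebra.comul (R := k) a ∈
    LinearMap.range (TensorProduct.map (Subalgebra.toSubmodule A).subtype
      (LinearMap.id (R := k) (M := H)))

open Coalgebra HopfAlgebra LinearMap in
/-- The key Hopf-algebra identity `a * x = x₁ * (S(x₂) a x₃)`, stated as:
multiplying the comultiplication of `x` through the right adjoint action of `a`
recovers `a * x`. -/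
lemma adj_expand [CommSemiring k] [Semiring H] [HopfAlgebra k H] (a x : H) :
    LinearMap.mul' k H
      (((sandwichMul (k := k) a ∘ₗ
          TensorProduct.map (antipode (R := k)) LinearMap.id ∘ₗ Coalgebra.comul).lTensor H)
        (Coalgebra.comul x)) = a * x := by
  rw [lTensor_comp_apply, lTensor_comp_apply, ← Coalgebra.coassoc_apply x]
  have key3 : ∀ z : (H ⊗[k] H) ⊗[k] H,
      LinearMap.mul' k H ((sandwichMul (k := k) a).lTensor H
        ((TensorProduct.map (antipode (R := k)) LinearMap.id).lTensor H
          ((TensorProduct.assoc k H H H) z)))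
      = sandwichMul (k := k) a
          (((LinearMap.mul' k H ∘ₗ (antipode (R := k)).lTensor H).rTensor H) z) := by
    intro z
    induction z using TensorProduct.induction_on with
    | zero => simp
    | tmul uv w =>
      induction uv using TensorProduct.induction_on with
      | zero => simp
      | tmul u v => simp [sandwichMul, mul_assoc]
      | add p q hp hq => simp only [add_tmul, map_add, hp, hq]
    | add p q hp hq => simp only [map_add, hp, hq]
  rw [key3, ← rTensor_comp_apply, LinearMap.comp_assoc, mul_antipode_lTensor_comul,
    rTensor_comp_apply, Coalgebra.rTensor_counit_comul]
  simp [sandwichMul]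

theorem span_mul_isRightCoidealSubalgebra [Field k] [Ring H] [HopfAlgebra k H]
    (A B : Subalgebra k H)
    (hA : IsRightCoidealSubalgebra A) (hB : IsRightCoidealSubalgebra B)
    (hAd : ∀ a ∈ A, ∀ x : H, rightAdjointAction (k := k) a x ∈ A) :
    let BA : Submodule k H := Submodule.span k {y : H | ∃ b ∈ B, ∃ a ∈ A, y = b * a}
    (1 : H) ∈ BA ∧ (∀ x ∈ BA, ∀ y ∈ BA, x * y ∈ BA) ∧
      ∀ x ∈ BA, Coalgebra.comul (R := k) x ∈
        LinearMap.range (TensorProduct.map BA.subtype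
          (LinearMap.id (R := k) (M := H))) := by
  intro BA
  have gen : ∀ b ∈ B, ∀ a ∈ A, b * a ∈ BA :=
    fun b hb a ha => Submodule.subset_span ⟨b, hb, a, ha, rfl⟩
  have h1 : (1 : H) ∈ BA := by simpa using gen 1 B.one_mem 1 A.one_mem
  -- `a * b ∈ BA` for `a ∈ A`, `b ∈ B`, using the adjoint-invariance of `A`.
  have hAB : ∀ a ∈ A, ∀ b ∈ B, a * b ∈ BA := by
    intro a ha b hb
    obtain ⟨t, ht⟩ := hB b hb
    rw [← adj_expand (k := k) a b, ← ht]
    clear ht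
    induction t using TensorProduct.induction_on with
    | zero => simpa using BA.zero_mem
    | tmul b' y =>
      have hmem := gen b' b'.2 _ (hAd a ha y)
      simpa [rightAdjointAction] using hmem
    | add p q hp hq => simpa only [map_add] using BA.add_mem hp hq
  have sandwich_mem : ∀ b ∈ B, ∀ a ∈ A, ∀ z ∈ BA, b * z * a ∈ BA := by
    intro b hb a ha z hz
    induction hz using Submodule.span_induction with
    | mem w hw =>
      obtain ⟨b', hb', a', ha', rfl⟩ := hw
      have : b * (b' * a') * a = (b * b') * (a' * a) := by
        rw [← mul_assoc, mul_assoc (b * b')]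
      rw [this]
      exact gen _ (B.mul_mem hb hb') _ (A.mul_mem ha' ha)
    | zero => simpa using BA.zero_mem
    | add u v hu hv ihu ihv => simpa [mul_add, add_mul] using BA.add_mem ihu ihv
    | smul c u hu ihu => simpa [mul_smul_comm, smul_mul_assoc] using BA.smul_mem c ihu
  have mulmem : ∀ x ∈ BA, ∀ y ∈ BA, x * y ∈ BA := by
    intro x hx
    induction hx using Submodule.span_induction with
    | mem w hw =>
      obtain ⟨b, hb, a, ha, rfl⟩ := hw
      intro y hy
      induction hy using Submodule.span_induction with
      | mem w' hw' =>
        obtain ⟨b', hb', a', ha', rfl⟩ := hw'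
        have : b * a * (b' * a') = b * (a * b') * a' := by
          rw [← mul_assoc, mul_assoc b a b']
        rw [this]
        exact sandwich_mem b hb a' ha' _ (hAB a ha b' hb')
      | zero => simpa using BA.zero_mem
      | add u v hu hv ihu ihv => simpa [mul_add] using BA.add_mem ihu ihv
      | smul c u hu ihu => simpa [mul_smul_comm] using BA.smul_mem c ihu
    | zero => intro y hy; simpa using BA.zero_mem
    | add u v hu hv ihu ihv =>
      intro y hy; simpa [add_mul] using BA.add_mem (ihu y hy) (ihv y hy)
    | smul c u hu ihu =>
      intro y hy; simpa [smul_mul_assoc] using BA.smul_mem c (ihu y hy)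
  refine ⟨h1, mulmem, ?_⟩
  intro x hx
  induction hx using Submodule.span_induction with
  | mem w hw =>
    obtain ⟨b, hb, a, ha, rfl⟩ := hw
    obtain ⟨t, ht⟩ := hB b hb
    obtain ⟨s, hs⟩ := hA a ha
    rw [Bialgebra.comul_mul, ← ht, ← hs]
    clear ht hs
    induction t using TensorProduct.induction_on with
    | zero => simp
    | tmul b' y =>
      induction s using TensorProduct.induction_on with
      | zero => simp
      | tmul a' z =>
        refine LinearMap.mem_range.mpr
          ⟨(⟨(b' : H) * (a' : H), gen _ b'.2 _ a'.2⟩ : BA) ⊗ₜ[k] (y * z), ?_⟩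
        simp [Algebra.TensorProduct.tmul_mul_tmul]
      | add p q hp hq =>
        rw [map_add, mul_add]
        exact Submodule.add_mem _ hp hq
    | add p q hp hq =>
      rw [map_add, add_mul]
      exact Submodule.add_mem _ hp hq
  | zero => simp
  | add u v hu hv ihu ihv => simpa [map_add] using Submodule.add_mem _ ihu ihv
  | smul c u hu ihu => simpa [map_smul] using Submodule.smul_mem _ c ihu
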